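/- For all n ≥ 0 and all 0 ≤ k ≤ n, there is a bijection between the set of type I sequences of length n−k for n+2 indeterminants and the set of planar rooted trees having n+2 leaves and exactly n−k+1 internal nodes. -/

import Mathlib

/-- A planar rooted tree: either a leaf, or an internal node carrying an ordered list
of subtrees.  (Well-formedness — every internal node has at least two children — is
the separate predicate `PRT.WF`.) -/
inductive PRT : Type where
  | leaf : PRT
  | node : List PRT → PRT

namespace PRT

/-- The number of leaves of a planar rooted tree. -/
def leaves : PRT → ℕ
  | .leaf => 1
  | .node ts => (ts.attach.map (fun t => leaves t.1)).sum
decreasing_by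
  have := List.sizeOf_lt_of_mem t.2
  simp only [PRT.node.sizeOf_spec]
  omega

/-- The number of internal nodes of a planar rooted tree. -/
def nodes : PRT → ℕ
  | .leaf => 0
  | .node ts => 1 + (ts.attach.map (fun t => nodes t.1)).sum
decreasing_by
  have := List.sizeOf_lt_of_mem t.2
  simp only [PRT.node.sizeOf_spec]
  omega

/-- A planar rooted tree is well formed when every internal node carries at least two
subtrees. -/
inductive WF : PRT → Prop where
  | leaf : WF .leaf
  | node (ts : List PRT) (h2 : 2 ≤ ts.length) (h : ∀ t ∈ ts, WF t) : WF (.node ts)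

/-- A planar binary rooted tree: every internal node has exactly two children. -/
inductive Binary : PRT → Prop where
  | leaf : Binary .leaf
  | node (a b : PRT) : Binary a → Binary b → Binary (.node [a, b])

end PRT

/-- `AdmissibleFrom nr s`: the sequence `s` of pairs `(i, ℓ)` is admissible when the
current number of "free" slots is `nr` (i.e. the first operator acts on `nr + 2`
indeterminants): either `i = 0` and `1 ≤ ℓ ≤ nr`, or `1 ≤ i ≤ nr` and
`1 ≤ ℓ ≤ nr + 1 - i`; afterwards `nr` drops by `ℓ`. -/
def AdmissibleFrom : ℕ → List (ℕ × ℕ) → Prop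
  | _, [] => True
  | nr, (i, l) :: rest =>
      ((i = 0 ∧ 1 ≤ l ∧ l ≤ nr) ∨ (1 ≤ i ∧ i ≤ nr ∧ 1 ≤ l ∧ l ≤ nr + 1 - i)) ∧
      AdmissibleFrom (nr - l) rest

/-- A type I sequence for `n + 2` indeterminants: an admissible sequence whose first
indices are weakly decreasing. -/
def TypeISeq (n : ℕ) (s : List (ℕ × ℕ)) : Prop :=
  AdmissibleFrom n s ∧ s.Chain' (fun a b => b.1 ≤ a.1)


namespace PRT

def corolla (m : ℕ) : PRT := .node (List.replicate m .leaf)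

def isLeaf : PRT → Bool
  | .leaf => true
  | .node _ => false

mutual
def replaceLeaf (s : PRT) : PRT → ℕ → PRT
  | .leaf, _ => s
  | .node ts, j => .node (replaceLeafF s ts j)
def replaceLeafF (s : PRT) : List PRT → ℕ → List PRT
  | [], _ => []
  | t :: ts, j =>
      if j < t.leaves then replaceLeaf s t j :: ts
      else t :: replaceLeafF s ts (j - t.leaves)
end

mutual
def corsT : ℕ → PRT → List (ℕ × ℕ)
  | _, .leaf => []
  | off, .node ts => if ts.all isLeaf then [(off, ts.length - 1)] else corsF off ts
def corsF : ℕ → List PRT → List (ℕ × ℕ)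
  | _, [] => []
  | off, t :: ts => corsT off t ++ corsF (off + t.leaves) ts
end

def C : PRT → List (ℕ × ℕ)
  | .leaf => []
  | .node ts => corsF 0 ts

def leavesF (ts : List PRT) : ℕ := (ts.map leaves).sum
def nodesF (ts : List PRT) : ℕ := (ts.map nodes).sum

@[simp] lemma leaves_leaf : leaves .leaf = 1 := by rw [leaves]
@[simp] lemma leaves_node (ts : List PRT) : leaves (.node ts) = leavesF ts := by
  rw [leaves, leavesF, List.map_attach_eq_pmap]
  simp [List.map_pmap]

@[simp] lemma nodes_leaf : nodes .leaf = 0 := by rw [nodes]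
@[simp] lemma nodes_node (ts : List PRT) : nodes (.node ts) = 1 + nodesF ts := by
  rw [nodes, nodesF, List.map_attach_eq_pmap]
  simp [List.map_pmap]

end PRT

namespace PRT

@[simp] lemma leavesF_nil : leavesF [] = 0 := rfl
@[simp] lemma leavesF_cons (t : PRT) (ts : List PRT) :
    leavesF (t :: ts) = leaves t + leavesF ts := by simp [leavesF]
@[simp] lemma nodesF_nil : nodesF [] = 0 := rfl
@[simp] lemma nodesF_cons (t : PRT) (ts : List PRT) :
    nodesF (t :: ts) = nodes t + nodesF ts := by simp [nodesF]

@[simp] lemma leaves_corolla (m : ℕ) : leaves (corolla m) = m := by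
  simp [corolla, leavesF, List.map_replicate]

@[simp] lemma nodes_corolla (m : ℕ) : nodes (corolla m) = 1 := by
  simp [corolla, nodesF, List.map_replicate]

lemma WF_corolla {m : ℕ} (hm : 2 ≤ m) : WF (corolla m) := by
  refine WF.node _ (by simp [hm]) ?_
  intro t ht
  rcases List.eq_of_mem_replicate ht with rfl
  exact WF.leaf

@[simp] lemma replaceLeaf_leaf (s : PRT) (j : ℕ) : replaceLeaf s .leaf j = s := by
  rw [replaceLeaf]
@[simp] lemma replaceLeaf_node (s : PRT) (ts : List PRT) (j : ℕ) :
    replaceLeaf s (.node ts) j = .node (replaceLeafF s ts j) := by rw [replaceLeaf]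
@[simp] lemma replaceLeafF_nil (s : PRT) (j : ℕ) : replaceLeafF s [] j = [] := by
  rw [replaceLeafF]
lemma replaceLeafF_cons (s t : PRT) (ts : List PRT) (j : ℕ) :
    replaceLeafF s (t :: ts) j =
      if j < t.leaves then replaceLeaf s t j :: ts
      else t :: replaceLeafF s ts (j - t.leaves) := by rw [replaceLeafF]

@[simp] lemma corsT_leaf (off : ℕ) : corsT off .leaf = [] := by rw [corsT]
lemma corsT_node (off : ℕ) (ts : List PRT) :
    corsT off (.node ts) =
      if ts.all isLeaf then [(off, ts.length - 1)] else corsF off ts := by rw [corsT]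
@[simp] lemma corsF_nil (off : ℕ) : corsF off [] = [] := by rw [corsF]
@[simp] lemma corsF_cons (off : ℕ) (t : PRT) (ts : List PRT) :
    corsF off (t :: ts) = corsT off t ++ corsF (off + t.leaves) ts := by rw [corsF]

@[simp] lemma corsT_corolla (off m : ℕ) : corsT off (corolla m) = [(off, m - 1)] := by
  rw [corolla, corsT_node]
  have : (List.replicate m (PRT.leaf)).all isLeaf = true := by
    rw [List.all_eq_true]
    intro t ht
    rcases List.eq_of_mem_replicate ht with rfl
    rfl
  simp [this]

end PRT

namespace PRT

mutual
theorem leaves_replaceLeaf (s : PRT) : ∀ (t : PRT) (j : ℕ), j < leaves t →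
    leaves (replaceLeaf s t j) + 1 = leaves t + leaves s
  | .leaf, j, _ => by simp; omega
  | .node ts, j, h => by
      have := leavesF_replaceLeafF s ts j (by simpa using h)
      simpa using this
termination_by t j h => sizeOf t
theorem leavesF_replaceLeafF (s : PRT) : ∀ (ts : List PRT) (j : ℕ), j < leavesF ts →
    leavesF (replaceLeafF s ts j) + 1 = leavesF ts + leaves s
  | [], j, h => by simp at h
  | t :: ts, j, h => by
      rw [replaceLeafF_cons]
      by_cases hj : j < leaves t
      · have := leaves_replaceLeaf s t j hj
        simp [hj]
        omega
      · have hj2 : j - leaves t < leavesF ts := by simp at h; omega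
        have := leavesF_replaceLeafF s ts (j - leaves t) hj2
        simp [hj]
        omega
termination_by ts j h => sizeOf ts
end

end PRT

namespace PRT

mutual
theorem nodes_replaceLeaf (s : PRT) : ∀ (t : PRT) (j : ℕ), j < leaves t →
    nodes (replaceLeaf s t j) = nodes t + nodes s
  | .leaf, j, _ => by simp
  | .node ts, j, h => by
      have := nodesF_replaceLeafF s ts j (by simpa using h)
      simp [this]
      omega
termination_by t j h => sizeOf t
theorem nodesF_replaceLeafF (s : PRT) : ∀ (ts : List PRT) (j : ℕ), j < leavesF ts →
    nodesF (replaceLeafF s ts j) = nodesF ts + nodes s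
  | [], j, h => by simp at h
  | t :: ts, j, h => by
      rw [replaceLeafF_cons]
      by_cases hj : j < leaves t
      · have := nodes_replaceLeaf s t j hj
        simp [hj, this]
        omega
      · have hj2 : j - leaves t < leavesF ts := by simp at h; omega
        have := nodesF_replaceLeafF s ts (j - leaves t) hj2
        simp [hj, this]
        omega
termination_by ts j h => sizeOf ts
end

lemma length_replaceLeafF (s : PRT) : ∀ (ts : List PRT) (j : ℕ),
    (replaceLeafF s ts j).length = ts.length
  | [], j => by simp
  | t :: ts, j => by
      rw [replaceLeafF_cons]
      by_cases hj : j < leaves t <;>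
        simp [hj, length_replaceLeafF s ts]

lemma WF_node_length {ts : List PRT} (h : WF (.node ts)) : 2 ≤ ts.length := by
  cases h; assumption
lemma WF_node_mem {ts : List PRT} (h : WF (.node ts)) : ∀ t ∈ ts, WF t := by
  cases h; assumption

mutual
theorem WF_replaceLeaf (s : PRT) (hs : WF s) : ∀ (t : PRT), WF t → ∀ (j : ℕ),
    WF (replaceLeaf s t j)
  | .leaf, _, j => by simpa using hs
  | .node ts, ht, j => by
      rw [replaceLeaf_node]
      exact WF.node _ (by rw [length_replaceLeafF]; exact WF_node_length ht)
        (WFF_replaceLeafF s hs ts (WF_node_mem ht) j)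
termination_by t => sizeOf t
theorem WFF_replaceLeafF (s : PRT) (hs : WF s) : ∀ (ts : List PRT),
    (∀ t ∈ ts, WF t) → ∀ (j : ℕ), ∀ u ∈ replaceLeafF s ts j, WF u
  | [], _, j => by simp
  | t :: ts, hmem, j => by
      rw [replaceLeafF_cons]
      by_cases hj : j < leaves t
      · simp only [hj, if_true]
        intro u hu
        rcases List.mem_cons.1 hu with rfl | hu
        · exact WF_replaceLeaf s hs t (hmem t (by simp)) j
        · exact hmem u (by simp [hu])
      · simp only [hj, if_false]
        intro u hu
        rcases List.mem_cons.1 hu with rfl | hu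
        · exact hmem u (by simp)
        · exact WFF_replaceLeafF s hs ts (fun x hx => hmem x (by simp [hx])) _ u hu
termination_by ts => sizeOf ts
end

end PRT

namespace PRT

lemma WF_leaves_pos : ∀ {t : PRT}, WF t → 1 ≤ leaves t := by
  intro t ht
  induction ht with
  | leaf => simp
  | node ts h2 h ih =>
      match ts, h2 with
      | t :: ts, _ =>
          have := ih t (by simp)
          simp
          omega

lemma leavesF_ge_length {ts : List PRT} (h : ∀ t ∈ ts, WF t) :
    ts.length ≤ leavesF ts := by
  induction ts with
  | nil => simp
  | cons t ts ih =>
      have h1 := WF_leaves_pos (h t (by simp))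
      have h2 := ih (fun x hx => h x (by simp [hx]))
      simp
      omega

mutual
theorem corsT_bound : ∀ (t : PRT), WF t → ∀ (off p a : ℕ), (p, a) ∈ corsT off t →
    off ≤ p ∧ p + a + 1 ≤ off + leaves t ∧ 1 ≤ a
  | .leaf, _, off, p, a => by simp
  | .node ts, ht, off, p, a => by
      rw [corsT_node]
      by_cases hall : ts.all isLeaf
      · simp only [hall, if_true, List.mem_singleton, Prod.mk.injEq]
        rintro ⟨rfl, rfl⟩
        have h2 := WF_node_length ht
        have h3 := leavesF_ge_length (WF_node_mem ht)
        simp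
        omega
      · simp only [hall, if_false]
        intro hmem
        have := corsF_bound ts (WF_node_mem ht) off p a hmem
        simp
        omega
termination_by t => sizeOf t
theorem corsF_bound : ∀ (ts : List PRT), (∀ t ∈ ts, WF t) →
    ∀ (off p a : ℕ), (p, a) ∈ corsF off ts →
    off ≤ p ∧ p + a + 1 ≤ off + leavesF ts ∧ 1 ≤ a
  | [], _, off, p, a => by simp
  | t :: ts, h, off, p, a => by
      rw [corsF_cons]
      intro hmem
      rcases List.mem_append.1 hmem with hm | hm
      · have := corsT_bound t (h t (by simp)) off p a hm
        simp
        omega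
      · have := corsF_bound ts (fun x hx => h x (by simp [hx])) (off + leaves t) p a hm
        simp
        omega
termination_by ts => sizeOf ts
end

mutual
theorem corsT_shift : ∀ (t : PRT) (off d : ℕ),
    corsT (off + d) t = (corsT d t).map (fun x => (x.1 + off, x.2))
  | .leaf, off, d => by simp
  | .node ts, off, d => by
      rw [corsT_node, corsT_node]
      by_cases hall : ts.all isLeaf
      · simp [hall]; omega
      · simp only [hall, if_false]
        exact corsF_shift ts off d
termination_by t => sizeOf t
theorem corsF_shift : ∀ (ts : List PRT) (off d : ℕ),
    corsF (off + d) ts = (corsF d ts).map (fun x => (x.1 + off, x.2))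
  | [], off, d => by simp
  | t :: ts, off, d => by
      rw [corsF_cons, corsF_cons, List.map_append, corsT_shift t off d]
      congr 1
      have : off + d + leaves t = off + (d + leaves t) := by omega
      rw [this, corsF_shift ts off (d + leaves t)]
termination_by ts => sizeOf ts
end

lemma mem_corsF_shift {ts : List PRT} {off d p a : ℕ} :
    (p, a) ∈ corsF (off + d) ts ↔ ∃ q, (q, a) ∈ corsF d ts ∧ p = q + off := by
  rw [corsF_shift]
  simp only [List.mem_map, Prod.mk.injEq]
  constructor
  · rintro ⟨⟨q, b⟩, hm, h1, h2⟩
    exact ⟨q, by simp [← h2, hm], by omega⟩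
  · rintro ⟨q, hm, rfl⟩
    exact ⟨(q, a), hm, rfl, rfl⟩

end PRT

namespace PRT

lemma isLeaf_replaceLeaf (ks : List PRT) (t : PRT) (j : ℕ) :
    isLeaf (replaceLeaf (.node ks) t j) = false := by
  cases t <;> simp [isLeaf]

lemma all_isLeaf_replaceLeafF (ks : List PRT) :
    ∀ (ts : List PRT) (j : ℕ), j < leavesF ts →
    (replaceLeafF (.node ks) ts j).all isLeaf = false := by
  intro ts
  induction ts with
  | nil => intro j h; simp at h
  | cons t ts ih =>
      intro j h
      rw [replaceLeafF_cons]
      by_cases hj : j < leaves t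
      · simp [hj, isLeaf_replaceLeaf]
      · have hj2 : j - leaves t < leavesF ts := by simp at h; omega
        simp [hj, ih _ hj2]

lemma corolla_eq_node (m : ℕ) : corolla m = .node (List.replicate m .leaf) := rfl

mutual
theorem mem_corsT_replace (l : ℕ) : ∀ (t : PRT) (off j : ℕ), j < leaves t →
    (off + j, l) ∈ corsT off (replaceLeaf (corolla (l + 1)) t j)
  | .leaf, off, j, h => by
      have hj : j = 0 := by simp at h; omega
      subst hj
      simp
  | .node ts, off, j, h => by
      rw [replaceLeaf_node, corsT_node, corolla_eq_node,
        all_isLeaf_replaceLeafF _ ts j (by simpa using h)]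
      simp only [Bool.false_eq_true, if_false]
      exact mem_corsF_replace l ts off j (by simpa using h)
termination_by t => sizeOf t
theorem mem_corsF_replace (l : ℕ) : ∀ (ts : List PRT) (off j : ℕ), j < leavesF ts →
    (off + j, l) ∈ corsF off (replaceLeafF (corolla (l + 1)) ts j)
  | [], off, j, h => by simp at h
  | t :: ts, off, j, h => by
      rw [replaceLeafF_cons]
      by_cases hj : j < leaves t
      · simp only [hj, if_true, corsF_cons, List.mem_append]
        exact Or.inl (mem_corsT_replace l t off j hj)
      · have hj2 : j - leaves t < leavesF ts := by simp at h; omega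
        simp only [hj, if_false, corsF_cons, List.mem_append]
        refine Or.inr ?_
        have := mem_corsF_replace l ts (off + leaves t) (j - leaves t) hj2
        have harith : off + leaves t + (j - leaves t) = off + j := by omega
        rwa [harith] at this
termination_by ts => sizeOf ts
end

end PRT

namespace PRT

mutual
theorem corsT_lower : ∀ (t : PRT) (off p a : ℕ), (p, a) ∈ corsT off t → off ≤ p
  | .leaf, off, p, a => by simp
  | .node ts, off, p, a => by
      rw [corsT_node]
      by_cases hall : ts.all isLeaf
      · simp only [hall, if_true, List.mem_singleton, Prod.mk.injEq]
        rintro ⟨rfl, rfl⟩; rfl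
      · simp only [hall, if_false]
        exact corsF_lower ts off p a
termination_by t => sizeOf t
theorem corsF_lower : ∀ (ts : List PRT) (off p a : ℕ), (p, a) ∈ corsF off ts → off ≤ p
  | [], off, p, a => by simp
  | t :: ts, off, p, a => by
      rw [corsF_cons]
      intro hm
      rcases List.mem_append.1 hm with hm | hm
      · exact corsT_lower t off p a hm
      · have := corsF_lower ts (off + leaves t) p a hm
        omega
termination_by ts => sizeOf ts
end

lemma corsF_of_all_isLeaf : ∀ {ts : List PRT}, ts.all isLeaf → ∀ off, corsF off ts = [] := by
  intro ts
  induction ts with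
  | nil => intro _ off; simp
  | cons t ts ih =>
      intro h off
      simp only [List.all_cons, Bool.and_eq_true] at h
      rcases h with ⟨h1, h2⟩
      cases t with
      | leaf => simp [ih h2]
      | node us => simp [isLeaf] at h1

mutual
theorem cors_replace_T (l : ℕ) : ∀ (t : PRT), WF t → ∀ (off j : ℕ), j < leaves t →
    ∀ p a, (p, a) ∈ corsT off (replaceLeaf (corolla (l + 1)) t j) →
    (p = off + j ∧ a = l) ∨ ∃ q b, (q, b) ∈ corsT off t ∧
      ((off + j < q ∧ p = q + l ∧ a = b) ∨ (q + b < off + j ∧ p = q ∧ a = b))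
  | .leaf, _, off, j, h, p, a => by
      have hj : j = 0 := by simp at h; omega
      subst hj
      simp only [replaceLeaf_leaf, corsT_corolla, List.mem_singleton, Prod.mk.injEq]
      rintro ⟨rfl, rfl⟩
      exact Or.inl ⟨by omega, by omega⟩
  | .node ts, ht, off, j, h, p, a => by
      rw [replaceLeaf_node, corsT_node, corolla_eq_node,
        all_isLeaf_replaceLeafF _ ts j (by simpa using h)]
      simp only [Bool.false_eq_true, if_false]
      intro hm
      rw [← corolla_eq_node] at hm
      have := cors_replace_F l ts (WF_node_mem ht) off j (by simpa using h) p a hm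
      rcases this with h1 | ⟨q, b, hqb, hcond⟩
      · exact Or.inl h1
      · refine Or.inr ⟨q, b, ?_, hcond⟩
        rw [corsT_node]
        by_cases hall : ts.all isLeaf
        · rw [corsF_of_all_isLeaf hall] at hqb
          simp at hqb
        · simp only [hall, if_false]
          exact hqb
termination_by t => sizeOf t
theorem cors_replace_F (l : ℕ) : ∀ (ts : List PRT), (∀ t ∈ ts, WF t) →
    ∀ (off j : ℕ), j < leavesF ts →
    ∀ p a, (p, a) ∈ corsF off (replaceLeafF (corolla (l + 1)) ts j) →
    (p = off + j ∧ a = l) ∨ ∃ q b, (q, b) ∈ corsF off ts ∧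
      ((off + j < q ∧ p = q + l ∧ a = b) ∨ (q + b < off + j ∧ p = q ∧ a = b))
  | [], _, off, j, h, p, a => by simp at h
  | t :: ts, hwf, off, j, h, p, a => by
      rw [replaceLeafF_cons]
      by_cases hj : j < leaves t
      · simp only [hj, if_true, corsF_cons, List.mem_append]
        have hlv : leaves (replaceLeaf (corolla (l + 1)) t j) = leaves t + l := by
          have := leaves_replaceLeaf (corolla (l + 1)) t j hj
          simp at this
          omega
        intro hm
        rcases hm with hm | hm
        · have := cors_replace_T l t (hwf t (by simp)) off j hj p a hm
          rcases this with h1 | ⟨q, b, hqb, hcond⟩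
          · exact Or.inl h1
          · exact Or.inr ⟨q, b, Or.inl hqb, hcond⟩
        · rw [hlv] at hm
          have harith : off + (leaves t + l) = l + (off + leaves t) := by omega
          rw [harith] at hm
          rcases mem_corsF_shift.1 hm with ⟨q, hq, rfl⟩
          have hq_lower := corsF_lower ts (off + leaves t) q a hq
          refine Or.inr ⟨q, a, Or.inr hq, Or.inl ⟨by omega, by omega, rfl⟩⟩
      · have hj2 : j - leaves t < leavesF ts := by simp at h; omega
        simp only [hj, if_false, corsF_cons, List.mem_append]
        intro hm
        rcases hm with hm | hm
        · have hb := corsT_bound t (hwf t (by simp)) off p a hm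
          exact Or.inr ⟨p, a, Or.inl hm, Or.inr ⟨by omega, rfl, rfl⟩⟩
        · have := cors_replace_F l ts (fun x hx => hwf x (by simp [hx]))
            (off + leaves t) (j - leaves t) hj2 p a hm
          rcases this with ⟨h1, h2⟩ | ⟨q, b, hqb, hcond⟩
          · exact Or.inl ⟨by omega, h2⟩
          · refine Or.inr ⟨q, b, Or.inr hqb, ?_⟩
            rcases hcond with ⟨h1, h2, h3⟩ | ⟨h1, h2, h3⟩
            · exact Or.inl ⟨by omega, h2, h3⟩
            · exact Or.inr ⟨by omega, h2, h3⟩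
termination_by ts => sizeOf ts
end

end PRT

namespace PRT

lemma WF_node_leaves {ts : List PRT} (h : WF (.node ts)) : 2 ≤ leavesF ts := by
  have h1 := WF_node_length h
  have h2 := leavesF_ge_length (WF_node_mem h)
  omega

mutual
theorem replaceLeaf_inj (s : PRT) (hs : 2 ≤ leaves s) :
    ∀ (t t' : PRT), WF t → WF t' → ∀ j, j < leaves t → j < leaves t' →
    replaceLeaf s t j = replaceLeaf s t' j → t = t'
  | .leaf, .leaf, _, _, j, _, _, _ => rfl
  | .leaf, .node ts', _, ht', j, hj, hj', heq => by
      exfalso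
      rw [replaceLeaf_leaf, replaceLeaf_node] at heq
      have := congrArg leaves heq
      have h2 := leavesF_replaceLeafF s ts' j (by simpa using hj')
      have h3 := WF_node_leaves ht'
      simp at this
      omega
  | .node ts, .leaf, ht, _, j, hj, hj', heq => by
      exfalso
      rw [replaceLeaf_leaf, replaceLeaf_node] at heq
      have := congrArg leaves heq
      have h2 := leavesF_replaceLeafF s ts j (by simpa using hj)
      have h3 := WF_node_leaves ht
      simp at this
      omega
  | .node ts, .node ts', ht, ht', j, hj, hj', heq => by
      rw [replaceLeaf_node, replaceLeaf_node] at heq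
      have heq' : replaceLeafF s ts j = replaceLeafF s ts' j := by
        injection heq
      rw [replaceLeafF_inj s hs ts ts' (WF_node_mem ht) (WF_node_mem ht') j
        (by simpa using hj) (by simpa using hj') heq']
termination_by t t' => sizeOf t
theorem replaceLeafF_inj (s : PRT) (hs : 2 ≤ leaves s) :
    ∀ (ts ts' : List PRT), (∀ t ∈ ts, WF t) → (∀ t ∈ ts', WF t) →
    ∀ j, j < leavesF ts → j < leavesF ts' →
    replaceLeafF s ts j = replaceLeafF s ts' j → ts = ts'
  | [], [], _, _, j, hj, _, _ => rfl
  | [], t' :: ts', _, _, j, hj, _, _ => by simp at hj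
  | t :: ts, [], _, _, j, _, hj', _ => by simp at hj'
  | t :: ts, t' :: ts', hw, hw', j, hj, hj', heq => by
      rw [replaceLeafF_cons, replaceLeafF_cons] at heq
      by_cases h1 : j < leaves t <;> by_cases h2 : j < leaves t'
      · simp only [h1, h2, if_true] at heq
        have e1 : replaceLeaf s t j = replaceLeaf s t' j := by injection heq
        have e2 : ts = ts' := by injection heq
        rw [replaceLeaf_inj s hs t t' (hw t (by simp)) (hw' t' (by simp)) j h1 h2 e1, e2]
      · exfalso
        simp only [h1, h2, if_true, if_false] at heq
        have e1 : replaceLeaf s t j = t' := by injection heq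
        have := congrArg leaves e1
        have h3 := leaves_replaceLeaf s t j h1
        omega
      · exfalso
        simp only [h1, h2, if_true, if_false] at heq
        have e1 : t = replaceLeaf s t' j := by injection heq
        have := congrArg leaves e1
        have h3 := leaves_replaceLeaf s t' j h2
        omega
      · simp only [h1, h2, if_false] at heq
        have e1 : t = t' := by injection heq
        have e2 : replaceLeafF s ts (j - leaves t) = replaceLeafF s ts' (j - leaves t') := by
          injection heq
        subst e1
        have hj2 : j - leaves t < leavesF ts := by simp at hj; omega
        have hj2' : j - leaves t < leavesF ts' := by simp at hj'; omega
        rw [replaceLeafF_inj s hs ts ts' (fun x hx => hw x (by simp [hx]))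
          (fun x hx => hw' x (by simp [hx])) (j - leaves t) hj2 hj2' e2]
termination_by ts ts' => sizeOf ts
end

end PRT

namespace PRT

lemma eq_replicate_of_all_isLeaf : ∀ {ts : List PRT}, ts.all isLeaf →
    ts = List.replicate ts.length .leaf := by
  intro ts
  induction ts with
  | nil => intro _; simp
  | cons t ts ih =>
      intro h
      simp only [List.all_cons, Bool.and_eq_true] at h
      rcases h with ⟨h1, h2⟩
      cases t with
      | leaf =>
          rw [List.length_cons, List.replicate_succ]
          exact congrArg _ (ih h2)
      | node us => simp [isLeaf] at h1

@[simp] lemma leavesF_replicate (m : ℕ) : leavesF (List.replicate m .leaf) = m := by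
  simp [leavesF, List.map_replicate]

@[simp] lemma nodesF_replicate (m : ℕ) : nodesF (List.replicate m .leaf) = 0 := by
  simp [nodesF, List.map_replicate]

lemma leavesF_all_isLeaf : ∀ {ts : List PRT}, ts.all isLeaf → leavesF ts = ts.length := by
  intro ts h
  rw [eq_replicate_of_all_isLeaf h]
  simp

lemma nodesF_all_isLeaf : ∀ {ts : List PRT}, ts.all isLeaf → nodesF ts = 0 := by
  intro ts h
  rw [eq_replicate_of_all_isLeaf h]
  simp

mutual
theorem contract_T : ∀ (t : PRT), WF t → ∀ off p a, (p, a) ∈ corsT off t →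
    ∃ t', WF t' ∧ leaves t' + a = leaves t ∧ nodes t' + 1 = nodes t ∧
      p - off < leaves t' ∧ replaceLeaf (corolla (a + 1)) t' (p - off) = t ∧
      ∀ q b, (q, b) ∈ corsT off t' → q ≤ p ∨ (q, b) ∈ corsT off t ∨ (q + a, b) ∈ corsT off t
  | .leaf, _, off, p, a => by simp
  | .node ts, ht, off, p, a => by
      intro hm
      rw [corsT_node] at hm
      by_cases hall : ts.all isLeaf
      · simp only [hall, if_true, List.mem_singleton, Prod.mk.injEq] at hm
        rcases hm with ⟨rfl, rfl⟩
        have h2 := WF_node_length ht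
        have hrep := eq_replicate_of_all_isLeaf hall
        have hlvF := leavesF_all_isLeaf hall
        have hndF := nodesF_all_isLeaf hall
        refine ⟨.leaf, WF.leaf, by simp [hlvF]; omega, by simp [hndF], by simp, ?_, by simp⟩
        simp only [Nat.sub_self, replaceLeaf_leaf]
        rw [corolla_eq_node]
        have hln : ts.length - 1 + 1 = ts.length := by omega
        rw [hln, ← hrep]
      · simp only [hall, if_false] at hm
        rcases contract_F ts (WF_node_mem ht) off p a hm with
          ⟨ts', hwf', hlv, hnd, hlt, heq, hcors⟩
        have hlen : ts.length = ts'.length := by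
          have := length_replaceLeafF (corolla (a + 1)) ts' (p - off)
          rw [heq] at this
          exact this
        refine ⟨.node ts', ?_, by simp; omega, by simp; omega,
          by simpa using hlt, by simp [heq], ?_⟩
        · refine WF.node _ ?_ hwf'
          rw [← hlen]
          exact WF_node_length ht
        · intro q b hqb
          rw [corsT_node] at hqb
          rw [corsT_node]
          simp only [hall, if_false]
          by_cases hall' : ts'.all isLeaf
          · simp only [hall', if_true, List.mem_singleton, Prod.mk.injEq] at hqb
            rcases hqb with ⟨rfl, rfl⟩
            exact Or.inl (corsF_lower _ _ _ _ hm)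
          · simp only [hall', if_false] at hqb
            exact hcors q b hqb
termination_by t => sizeOf t
theorem contract_F : ∀ (ts : List PRT), (∀ t ∈ ts, WF t) →
    ∀ off p a, (p, a) ∈ corsF off ts →
    ∃ ts', (∀ t ∈ ts', WF t) ∧ leavesF ts' + a = leavesF ts ∧ nodesF ts' + 1 = nodesF ts ∧
      p - off < leavesF ts' ∧ replaceLeafF (corolla (a + 1)) ts' (p - off) = ts ∧
      ∀ q b, (q, b) ∈ corsF off ts' → q ≤ p ∨ (q, b) ∈ corsF off ts ∨ (q + a, b) ∈ corsF off ts
  | [], _, off, p, a => by simp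
  | t :: ts, hwf, off, p, a => by
      intro hm
      rw [corsF_cons] at hm
      rcases List.mem_append.1 hm with hm' | hm'
      · rcases contract_T t (hwf t (by simp)) off p a hm' with
          ⟨t', hwf', hlv, hnd, hlt, heq, hcors⟩
        refine ⟨t' :: ts, ?_, by simp; omega, by simp; omega, by simp; omega, ?_, ?_⟩
        · intro x hx
          rcases List.mem_cons.1 hx with rfl | hx
          · exact hwf'
          · exact hwf x (by simp [hx])
        · rw [replaceLeafF_cons]
          simp only [hlt, if_true, heq]
        · intro q b hqb
          rw [corsF_cons, List.mem_append] at hqb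
          rw [corsF_cons]
          rcases hqb with hqb | hqb
          · rcases hcors q b hqb with h | h | h
            · exact Or.inl h
            · exact Or.inr (Or.inl (List.mem_append.2 (Or.inl h)))
            · exact Or.inr (Or.inr (List.mem_append.2 (Or.inl h)))
          · refine Or.inr (Or.inr (List.mem_append.2 (Or.inr ?_)))
            have harith : off + leaves t = a + (off + leaves t') := by omega
            rw [harith]
            exact mem_corsF_shift.2 ⟨q, hqb, rfl⟩
      · have hlow := corsF_lower ts (off + leaves t) p a hm'
        rcases contract_F ts (fun x hx => hwf x (by simp [hx])) (off + leaves t) p a hm' with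
          ⟨ts'', hwf', hlv, hnd, hlt, heq, hcors⟩
        refine ⟨t :: ts'', ?_, by simp; omega, by simp; omega, by simp; omega, ?_, ?_⟩
        · intro x hx
          rcases List.mem_cons.1 hx with rfl | hx
          · exact hwf x (by simp)
          · exact hwf' x hx
        · rw [replaceLeafF_cons]
          have hge : ¬ p - off < leaves t := by omega
          simp only [hge, if_false]
          congr 1
          have harith : p - off - leaves t = p - (off + leaves t) := by omega
          rw [harith, heq]
        · intro q b hqb
          rw [corsF_cons, List.mem_append] at hqb
          rw [corsF_cons]
          rcases hqb with hqb | hqb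
          · exact Or.inr (Or.inl (List.mem_append.2 (Or.inl hqb)))
          · rcases hcors q b hqb with h | h | h
            · exact Or.inl h
            · exact Or.inr (Or.inl (List.mem_append.2 (Or.inr h)))
            · exact Or.inr (Or.inr (List.mem_append.2 (Or.inr h)))
termination_by ts => sizeOf ts
end

end PRT

namespace PRT

lemma all_isLeaf_replicate (m : ℕ) : (List.replicate m (.leaf : PRT)).all isLeaf = true := by
  rw [List.all_eq_true]
  intro t ht
  rcases List.eq_of_mem_replicate ht with rfl
  rfl

@[simp] lemma C_node (ts : List PRT) : C (.node ts) = corsF 0 ts := rfl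

@[simp] lemma C_corolla (m : ℕ) : C (corolla m) = [] := by
  rw [corolla_eq_node, C_node]
  exact corsF_of_all_isLeaf (all_isLeaf_replicate m) 0

end PRT

open PRT

def encode : ℕ → List (ℕ × ℕ) → PRT
  | n, [] => corolla (n + 2)
  | n, (i, l) :: rest => replaceLeaf (corolla (l + 1)) (encode (n - l) rest) i

@[simp] lemma encode_nil (n : ℕ) : encode n [] = corolla (n + 2) := rfl
@[simp] lemma encode_cons (n i l : ℕ) (rest : List (ℕ × ℕ)) :
    encode n ((i, l) :: rest) = replaceLeaf (corolla (l + 1)) (encode (n - l) rest) i := rfl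

lemma adm_cons {n i l : ℕ} {rest : List (ℕ × ℕ)} :
    AdmissibleFrom n ((i, l) :: rest) ↔
      ((i = 0 ∧ 1 ≤ l ∧ l ≤ n) ∨ (1 ≤ i ∧ i ≤ n ∧ 1 ≤ l ∧ l ≤ n + 1 - i)) ∧
      AdmissibleFrom (n - l) rest := Iff.rfl

lemma adm_head_facts {n i l : ℕ} {rest : List (ℕ × ℕ)}
    (h : AdmissibleFrom n ((i, l) :: rest)) :
    1 ≤ l ∧ l ≤ n ∧ i + l ≤ n + 1 := by
  rcases h.1 with ⟨rfl, h1, h2⟩ | ⟨h1, h2, h3, h4⟩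
  · omega
  · omega

lemma encode_eq_node : ∀ (s : List (ℕ × ℕ)) (n : ℕ), ∃ ts, encode n s = .node ts
  | [], n => ⟨_, rfl⟩
  | (i, l) :: rest, n => by
      obtain ⟨ts₀, h⟩ := encode_eq_node rest (n - l)
      rw [encode_cons, h, replaceLeaf_node]
      exact ⟨_, rfl⟩

lemma encode_leaves : ∀ (s : List (ℕ × ℕ)) (n : ℕ), AdmissibleFrom n s →
    leaves (encode n s) = n + 2
  | [], n, _ => by simp
  | (i, l) :: rest, n, h => by
      obtain ⟨hl1, hl2, hil⟩ := adm_head_facts h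
      have hrec := encode_leaves rest (n - l) h.2
      have hi : i < leaves (encode (n - l) rest) := by omega
      have := leaves_replaceLeaf (corolla (l + 1)) (encode (n - l) rest) i hi
      rw [encode_cons]
      simp at this
      omega

lemma encode_nodes : ∀ (s : List (ℕ × ℕ)) (n : ℕ), AdmissibleFrom n s →
    nodes (encode n s) = s.length + 1
  | [], n, _ => by simp
  | (i, l) :: rest, n, h => by
      obtain ⟨hl1, hl2, hil⟩ := adm_head_facts h
      have hrec := encode_nodes rest (n - l) h.2
      have hlv := encode_leaves rest (n - l) h.2
      have hi : i < leaves (encode (n - l) rest) := by omega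
      have := nodes_replaceLeaf (corolla (l + 1)) (encode (n - l) rest) i hi
      rw [encode_cons, this]
      simp
      omega

lemma encode_WF : ∀ (s : List (ℕ × ℕ)) (n : ℕ), AdmissibleFrom n s → WF (encode n s)
  | [], n, _ => WF_corolla (by omega)
  | (i, l) :: rest, n, h => by
      obtain ⟨hl1, _, _⟩ := adm_head_facts h
      exact WF_replaceLeaf _ (WF_corolla (by omega)) _ (encode_WF rest (n - l) h.2) i

/-- The key invariant: for a type I sequence, the head `(i, l)` is the unique corolla
of maximal leftmost-leaf position in the encoded tree. -/
lemma C_encode : ∀ (rest : List (ℕ × ℕ)) (n i l : ℕ),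
    AdmissibleFrom n ((i, l) :: rest) →
    List.Chain' (fun a b => b.1 ≤ a.1) ((i, l) :: rest) →
    (i, l) ∈ C (encode n ((i, l) :: rest)) ∧
    ∀ p a, (p, a) ∈ C (encode n ((i, l) :: rest)) → (p = i ∧ a = l) ∨ p < i := by
  intro rest
  induction rest with
  | nil =>
      intro n i l hadm _
      obtain ⟨hl1, hl2, hil⟩ := adm_head_facts hadm
      rw [encode_cons, encode_nil, corolla_eq_node (n - l + 2), replaceLeaf_node, C_node]
      have hi : i < leavesF (List.replicate (n - l + 2) .leaf) := by simp; omega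
      constructor
      · have := mem_corsF_replace l (List.replicate (n - l + 2) .leaf) 0 i hi
        simpa using this
      · intro p a hm
        have := cors_replace_F l (List.replicate (n - l + 2) .leaf)
          (fun t ht => by rcases List.eq_of_mem_replicate ht with rfl; exact WF.leaf)
          0 i hi p a hm
        rcases this with ⟨h1, h2⟩ | ⟨q, b, hq, _⟩
        · exact Or.inl ⟨by omega, h2⟩
        · rw [corsF_of_all_isLeaf (all_isLeaf_replicate _) 0] at hq
          simp at hq
  | cons hd rest ih =>
      intro n i l hadm hch
      obtain ⟨hl1, hl2, hil⟩ := adm_head_facts hadm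
      obtain ⟨i₂, l₂⟩ := hd
      have hadm₂ : AdmissibleFrom (n - l) ((i₂, l₂) :: rest) := hadm.2
      have hch₂ : List.Chain' (fun a b => b.1 ≤ a.1) ((i₂, l₂) :: rest) := hch.tail
      have hle : i₂ ≤ i := by
        have := List.isChain_cons_cons.1 hch
        exact this.1
      have hIH := ih (n - l) i₂ l₂ hadm₂ hch₂
      have hmax : ∀ p a, (p, a) ∈ C (encode (n - l) ((i₂, l₂) :: rest)) → p ≤ i := by
        intro p a hm
        rcases hIH.2 p a hm with ⟨rfl, _⟩ | h
        · exact hle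
        · omega
      obtain ⟨ts₀, hts₀⟩ := encode_eq_node ((i₂, l₂) :: rest) (n - l)
      have hWF₀ : WF (.node ts₀) := by rw [← hts₀]; exact encode_WF _ _ hadm₂
      have hlv₀ : leavesF ts₀ = n - l + 2 := by
        have := encode_leaves ((i₂, l₂) :: rest) (n - l) hadm₂
        rw [hts₀] at this
        simpa using this
      have hi : i < leavesF ts₀ := by omega
      rw [encode_cons, hts₀, replaceLeaf_node, C_node]
      rw [hts₀, C_node] at hmax hIH
      constructor
      · have := mem_corsF_replace l ts₀ 0 i hi
        simpa using this
      · intro p a hm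
        have := cors_replace_F l ts₀ (WF_node_mem hWF₀) 0 i hi p a hm
        rcases this with ⟨h1, h2⟩ | ⟨q, b, hq, hcond⟩
        · exact Or.inl ⟨by omega, h2⟩
        · have hqle := hmax q b hq
          rcases hcond with ⟨h1, _, _⟩ | ⟨h1, h2, h3⟩
          · omega
          · exact Or.inr (by omega)

lemma encode_inj : ∀ (s s' : List (ℕ × ℕ)) (n : ℕ), TypeISeq n s → TypeISeq n s' →
    encode n s = encode n s' → s = s'
  | [], [], _, _, _, _ => rfl
  | [], (i, l) :: rest, n, _, hs', heq => by
      exfalso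
      have h1 := (C_encode rest n i l hs'.1 hs'.2).1
      rw [← heq] at h1
      simp at h1
  | (i, l) :: rest, [], n, hs, _, heq => by
      exfalso
      have h1 := (C_encode rest n i l hs.1 hs.2).1
      rw [heq] at h1
      simp at h1
  | (i, l) :: rest, (i', l') :: rest', n, hs, hs', heq => by
      have h1 := C_encode rest n i l hs.1 hs.2
      have h1' := C_encode rest' n i' l' hs'.1 hs'.2
      have hmem : (i', l') ∈ C (encode n ((i, l) :: rest)) := by rw [heq]; exact h1'.1
      have hmem' : (i, l) ∈ C (encode n ((i', l') :: rest')) := by rw [← heq]; exact h1.1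
      have e1 := h1.2 i' l' hmem
      have e2 := h1'.2 i l hmem'
      have hii : i = i' ∧ l = l' := by
        rcases e1 with ⟨h, h'⟩ | h <;> rcases e2 with ⟨g, g'⟩ | g <;> omega
      obtain ⟨rfl, rfl⟩ := hii
      obtain ⟨hl1, hl2, hil⟩ := adm_head_facts hs.1
      have hWF := encode_WF rest (n - l) hs.1.2
      have hWF' := encode_WF rest' (n - l) hs'.1.2
      have hlv := encode_leaves rest (n - l) hs.1.2
      have hlv' := encode_leaves rest' (n - l) hs'.1.2
      rw [encode_cons, encode_cons] at heq
      have hrec := replaceLeaf_inj (corolla (l + 1)) (by simp; omega)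
        (encode (n - l) rest) (encode (n - l) rest') hWF hWF' i
        (by omega) (by omega) heq
      have : rest = rest' := encode_inj rest rest' (n - l)
        ⟨hs.1.2, hs.2.tail⟩ ⟨hs'.1.2, hs'.2.tail⟩ hrec
      rw [this]

namespace PRT

lemma eq_leaf_of_nodes_eq_zero : ∀ {t : PRT}, nodes t = 0 → t = .leaf := by
  intro t
  cases t with
  | leaf => intro _; rfl
  | node ts => intro h; simp at h

lemma eq_corolla_of_nodes_eq_one : ∀ {t : PRT}, WF t → nodes t = 1 →
    t = corolla (leaves t) := by
  intro t hw hn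
  cases t with
  | leaf => simp at hn
  | node ts =>
      have hts : nodesF ts = 0 := by simp at hn; omega
      have hall : ts.all isLeaf = true := by
        rw [List.all_eq_true]
        intro x hx
        have : nodes x = 0 := by
          clear hn hw
          induction ts with
          | nil => simp at hx
          | cons y ys ih =>
              rcases List.mem_cons.1 hx with rfl | hx'
              · simp at hts; omega
              · exact ih (by simp at hts ⊢; omega) hx'
        rw [eq_leaf_of_nodes_eq_zero this]
        rfl
      have hrep := eq_replicate_of_all_isLeaf hall
      rw [corolla_eq_node]
      rw [leaves_node, leavesF_all_isLeaf hall]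
      exact congrArg _ hrep

lemma corsF_ne_nil_aux : ∀ (ts : List PRT),
    (∀ x ∈ ts, isLeaf x = false → ∀ d, corsT d x ≠ []) →
    ∀ x ∈ ts, isLeaf x = false → ∀ off, corsF off ts ≠ [] := by
  intro ts
  induction ts with
  | nil => intro _ x hx; simp at hx
  | cons t ts ih =>
      intro key x hx hxl off
      rw [corsF_cons]
      intro hemp
      rcases List.append_eq_nil_iff.1 hemp with ⟨h1, h2⟩
      rcases List.mem_cons.1 hx with rfl | hx'
      · exact key x (by simp) hxl off h1
      · exact ih (fun y hy => key y (List.mem_cons_of_mem _ hy)) x hx' hxl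
          (off + leaves t) h2

theorem corsT_ne_nil : ∀ (t : PRT), isLeaf t = false → ∀ off, corsT off t ≠ []
  | .leaf, h, off => by simp [isLeaf] at h
  | .node ts, _, off => by
      have key : ∀ x ∈ ts, isLeaf x = false → ∀ d, corsT d x ≠ [] := by
        intro x hx
        have : sizeOf x < sizeOf (PRT.node ts) := by
          have := List.sizeOf_lt_of_mem hx
          simp only [PRT.node.sizeOf_spec]
          omega
        exact corsT_ne_nil x
      rw [corsT_node]
      by_cases hall : ts.all isLeaf
      · simp [hall]
      · simp only [hall, if_false]
        have : ∃ x ∈ ts, isLeaf x = false := by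
          by_contra hcon
          push_neg at hcon
          apply hall
          rw [List.all_eq_true]
          intro x hx
          have := hcon x hx
          revert this
          cases isLeaf x <;> simp
        rcases this with ⟨x, hx, hxl⟩
        exact corsF_ne_nil_aux ts key x hx hxl off
termination_by t => sizeOf t
decreasing_by
  assumption

lemma exists_max_fst : ∀ (L : List (ℕ × ℕ)), L ≠ [] → ∃ x ∈ L, ∀ y ∈ L, y.1 ≤ x.1 := by
  intro L
  induction L with
  | nil => intro h; simp at h
  | cons a L ih =>
      intro _
      rcases eq_or_ne L [] with rfl | hL
      · exact ⟨a, by simp, by simp⟩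
      · rcases ih hL with ⟨x, hx, hmax⟩
        rcases le_or_gt x.1 a.1 with h | h
        · refine ⟨a, by simp, ?_⟩
          intro y hy
          rcases List.mem_cons.1 hy with rfl | hy'
          · exact le_refl _
          · exact le_trans (hmax y hy') h
        · refine ⟨x, by simp [hx], ?_⟩
          intro y hy
          rcases List.mem_cons.1 hy with rfl | hy'
          · omega
          · exact hmax y hy'

lemma mem_corsF_decomp : ∀ (ts : List PRT) (off p a : ℕ), (p, a) ∈ corsF off ts →
    ∃ t ∈ ts, ∃ d, (p, a) ∈ corsT d t := by
  intro ts
  induction ts with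
  | nil => intro off p a h; simp at h
  | cons t ts ih =>
      intro off p a h
      rw [corsF_cons] at h
      rcases List.mem_append.1 h with h | h
      · exact ⟨t, by simp, off, h⟩
      · rcases ih (off + leaves t) p a h with ⟨x, hx, d, hd⟩
        exact ⟨x, by simp [hx], d, hd⟩

lemma leaves_member_bound : ∀ (ts : List PRT), (∀ t ∈ ts, WF t) → ∀ x ∈ ts,
    leaves x + ts.length ≤ leavesF ts + 1 := by
  intro ts
  induction ts with
  | nil => intro _ x hx; simp at hx
  | cons t ts ih =>
      intro hw x hx
      rcases List.mem_cons.1 hx with rfl | hx'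
      · have := leavesF_ge_length (fun y hy => hw y (List.mem_cons_of_mem _ hy))
        simp
        omega
      · have h1 := ih (fun y hy => hw y (List.mem_cons_of_mem _ hy)) x hx'
        have h2 := WF_leaves_pos (hw t (by simp))
        simp
        omega

end PRT

namespace PRT

lemma exists_nonleaf_of_nodesF_pos : ∀ (ts : List PRT), 1 ≤ nodesF ts →
    ∃ x ∈ ts, isLeaf x = false := by
  intro ts
  induction ts with
  | nil => intro h; simp at h
  | cons t ts ih =>
      intro h
      cases t with
      | leaf =>
          have : 1 ≤ nodesF ts := by simp at h; omega
          rcases ih this with ⟨x, hx, hxl⟩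
          exact ⟨x, List.mem_cons_of_mem _ hx, hxl⟩
      | node us => exact ⟨.node us, by simp, rfl⟩

end PRT

theorem encode_surj : ∀ (m n : ℕ) (t : PRT), WF t → leaves t = n + 2 →
    nodes t = m + 1 → ∃ s, s.length = m ∧ TypeISeq n s ∧ encode n s = t := by
  intro m
  induction m using Nat.strong_induction_on with
  | _ m IH =>
    intro n t hw hlv hnd
    match m with
    | 0 =>
        have hc := eq_corolla_of_nodes_eq_one hw hnd
        exact ⟨[], rfl, ⟨trivial, List.isChain_nil⟩, by rw [encode_nil, ← hlv, ← hc]⟩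
    | Nat.succ m' =>
        cases t with
        | leaf => simp at hnd
        | node ts =>
          have hlvF : leavesF ts = n + 2 := by simpa using hlv
          have hndF : nodesF ts = m' + 1 := by simp at hnd; omega
          have hCne : corsF 0 ts ≠ [] := by
            rcases exists_nonleaf_of_nodesF_pos ts (by omega) with ⟨x, hx, hxl⟩
            exact corsF_ne_nil_aux ts (fun y _ hyl d => corsT_ne_nil y hyl d) x hx hxl 0
          obtain ⟨⟨i, l⟩, hmem, hmax⟩ := exists_max_fst _ hCne
          have hb := corsF_bound ts (WF_node_mem hw) 0 i l hmem
          obtain ⟨x, hxmem, d, hd⟩ := mem_corsF_decomp ts 0 i l hmem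
          have hxb := corsT_bound x (WF_node_mem hw x hxmem) d i l hd
          have hmb := leaves_member_bound ts (WF_node_mem hw) x hxmem
          have hlen2 := WF_node_length hw
          have hln : l ≤ n := by omega
          obtain ⟨ts', hwf', hlvc, hndc, hlt, heqc, hcors⟩ :=
            contract_F ts (WF_node_mem hw) 0 i l hmem
          rw [Nat.sub_zero] at hlt heqc
          have hlen' : ts'.length = ts.length := by
            have := length_replaceLeafF (corolla (l + 1)) ts' i
            rw [heqc] at this
            omega
          have hWFt' : WF (.node ts') := WF.node _ (by omega) hwf'
          have hlv' : leavesF ts' = (n - l) + 2 := by omega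
          have hnd' : nodes (PRT.node ts') = m' + 1 := by simp; omega
          obtain ⟨rest, hrl, hrT, hre⟩ := IH m' (by omega) (n - l) (.node ts') hWFt'
            (by simp [hlv']) hnd'
          have hC' : ∀ q b, (q, b) ∈ corsF 0 ts' → q ≤ i := by
            intro q b hq
            rcases hcors q b hq with h | h | h
            · exact h
            · exact hmax _ h
            · have := hmax _ h
              simp at this
              omega
          refine ⟨(i, l) :: rest, by simp [hrl], ⟨?_, ?_⟩, ?_⟩
          · rw [adm_cons]
            refine ⟨?_, hrT.1⟩
            rcases Nat.eq_zero_or_pos i with rfl | hi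
            · exact Or.inl ⟨rfl, by omega, by omega⟩
            · exact Or.inr ⟨hi, by omega, by omega, by omega⟩
          · match rest, hrT, hre with
            | [], _, _ => exact List.isChain_singleton _
            | (i₂, l₂) :: r₂, hrT, hre =>
                refine List.isChain_cons_cons.2 ?_
                refine ⟨?_, hrT.2⟩
                have hmem₂ := (C_encode r₂ (n - l) i₂ l₂ hrT.1 hrT.2).1
                rw [hre] at hmem₂
                rw [C_node] at hmem₂
                exact hC' i₂ l₂ hmem₂
          · rw [encode_cons, hre, replaceLeaf_node, heqc]

/-- For all `n ≥ 0` and all `0 ≤ k ≤ n`, there is a bijection between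
the set of type I sequences of length `n - k` for `n + 2` indeterminants and the set of
planar rooted trees having `n + 2` leaves and exactly `n - k + 1` internal nodes. -/
theorem typeISeq_equiv_PRT (n k : ℕ) (hk : k ≤ n) :
    Nonempty ({s : List (ℕ × ℕ) // s.length = n - k ∧ TypeISeq n s} ≃
      {t : PRT // t.WF ∧ t.leaves = n + 2 ∧ t.nodes = n - k + 1}) := by
  refine ⟨Equiv.ofBijective (fun s => ⟨encode n s.1,
    encode_WF _ _ s.2.2.1, encode_leaves _ _ s.2.2.1,
    by rw [encode_nodes _ _ s.2.2.1, s.2.1]⟩) ⟨?_, ?_⟩⟩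
  · rintro ⟨s, hs⟩ ⟨s', hs'⟩ h
    exact Subtype.ext (encode_inj s s' n hs.2 hs'.2 (congrArg Subtype.val h))
  · rintro ⟨t, hwf, hlv, hnd⟩
    obtain ⟨s, hsl, hsT, hse⟩ := encode_surj (n - k) n t hwf hlv hnd
    exact ⟨⟨s, hsl, hsT⟩, Subtype.ext hse⟩
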